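/- arXiv:0907.0287 — 4 statements merged into one kernel-verified Lean document; each statement's English description precedes it below -/
import Mathlib

section
/- For a partition κ with at most N parts and the generalized Pochhammer symbol [u]_κ^{(α)} = ∏_{j=1}^N Γ(u - (j-1)/α + κ_j)/Γ(u - (j-1)/α), one has the duplication identity [u]_{2κ}^{(1)} = 2^{2|κ|} [u/2]_κ^{(2)} [(u+1)/2]_κ^{(2)}, where 2κ denotes the partition obtained by doubling each part of κ. -/
open MeasureTheory Matrix
open scoped BigOperators

attribute [local instance] Classical.propDecidable

noncomputable section

/-- Auxiliary: Legendre duplication identity in ratio form. -/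
lemma dup_ratio (x : ℝ) (hx : 0 < x) (k : ℕ) :
    Real.Gamma (2*x + 2*k) / Real.Gamma (2*x) =
    2^(2*k) * (Real.Gamma (x + k) / Real.Gamma x) *
      (Real.Gamma (x + 1/2 + k) / Real.Gamma (x + 1/2)) := by
  have h1 := Real.Gamma_mul_Gamma_add_half x
  have h2 := Real.Gamma_mul_Gamma_add_half (x + k)
  have hA : Real.Gamma x ≠ 0 := (Real.Gamma_pos_of_pos hx).ne'
  have hB : Real.Gamma (x + 1/2) ≠ 0 :=
    (Real.Gamma_pos_of_pos (by linarith)).ne'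
  have hC : Real.Gamma (2*x) ≠ 0 :=
    (Real.Gamma_pos_of_pos (by linarith)).ne'
  have h2' : Real.Gamma (x + k) * Real.Gamma (x + 1/2 + k) =
      Real.Gamma (2*x + 2*k) * (2:ℝ)^((1:ℝ) - 2*x - 2*k) * Real.sqrt Real.pi := by
    rw [show x + 1/2 + (k:ℝ) = x + k + 1/2 by ring]
    rw [show 2*x + 2*(k:ℝ) = 2*(x + k) by ring,
      show (1:ℝ) - 2*x - 2*k = 1 - 2*(x+k) by ring]
    exact h2
  have hpow : (2:ℝ)^(2*k) * (2:ℝ)^((1:ℝ) - 2*x - 2*k) = (2:ℝ)^((1:ℝ) - 2*x) := by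
    rw [show ((2:ℝ)^(2*k) : ℝ) = (2:ℝ)^((2*k : ℕ) : ℝ) from (Real.rpow_natCast 2 (2*k)).symm,
      ← Real.rpow_add (by norm_num)]
    norm_num
  have key : Real.Gamma (2*x + 2*k) * (Real.Gamma x * Real.Gamma (x + 1/2)) =
      2^(2*k) * Real.Gamma (x + k) * Real.Gamma (x + 1/2 + k) * Real.Gamma (2*x) := by
    calc Real.Gamma (2*x + 2*k) * (Real.Gamma x * Real.Gamma (x + 1/2))
        = Real.Gamma (2*x + 2*k) * (Real.Gamma (2*x) * (2:ℝ)^((1:ℝ) - 2*x) * Real.sqrt Real.pi) := by rw [h1]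
      _ = Real.Gamma (2*x + 2*k) * (Real.Gamma (2*x) * ((2:ℝ)^(2*k) * (2:ℝ)^((1:ℝ) - 2*x - 2*k)) * Real.sqrt Real.pi) := by rw [hpow]
      _ = 2^(2*k) * (Real.Gamma (x + k) * Real.Gamma (x + 1/2 + k)) * Real.Gamma (2*x) := by
          rw [h2']; ring
      _ = _ := by ring
  rw [mul_assoc, div_mul_div_comm, mul_div_assoc',
    div_eq_div_iff hC (mul_ne_zero hA hB)]
  linear_combination key

/-- Generalized Pochhammer symbol `[u]_kappa^{(alpha)}` (Gamma-ratio form),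
for a partition with at most `N` parts. -/
def genPochG {N : ℕ} (α u : ℝ) (κ : Fin N → ℕ) : ℝ :=
  ∏ j : Fin N, Real.Gamma (u - (j : ℕ) / α + κ j) / Real.Gamma (u - (j : ℕ) / α)

/-- duplication identity for the generalized Pochhammer symbol:
`[u]_{2kappa}^{(1)} = 2^{2|kappa|} [u/2]_kappa^{(2)} [(u+1)/2]_kappa^{(2)}`. -/
theorem pochhammer_duplication (N : ℕ) (κ : Fin N → ℕ) (hκ : Antitone κ)
    (u : ℝ) (hu : ∀ j : Fin N, (j : ℝ) < u) :
    genPochG 1 u (fun i => 2 * κ i) =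
      2 ^ (2 * ∑ i, κ i) * genPochG 2 (u / 2) κ * genPochG 2 ((u + 1) / 2) κ := by
  unfold genPochG
  have hfac : ∀ j : Fin N,
      Real.Gamma (u - (j : ℕ) / 1 + ((2 * κ j : ℕ) : ℝ)) / Real.Gamma (u - (j : ℕ) / 1) =
      2 ^ (2 * κ j) * (Real.Gamma (u/2 - (j : ℕ) / 2 + (κ j : ℝ)) / Real.Gamma (u/2 - (j : ℕ) / 2)) *
        (Real.Gamma ((u+1)/2 - (j : ℕ) / 2 + (κ j : ℝ)) / Real.Gamma ((u+1)/2 - (j : ℕ) / 2)) := by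
    intro j
    have hx : (0:ℝ) < (u - (j : ℕ)) / 2 := by
      have := hu j; linarith
    have h := dup_ratio ((u - (j : ℕ)) / 2) hx (κ j)
    rw [show 2*((u - ((j:ℕ):ℝ))/2) + 2*(κ j : ℝ) = u - (j:ℕ)/1 + ((2 * κ j : ℕ) : ℝ) by
        push_cast; ring,
      show 2*((u - ((j:ℕ):ℝ))/2) = u - (j:ℕ)/1 by ring,
      show (u - ((j:ℕ):ℝ))/2 + (κ j : ℝ) = u/2 - (j:ℕ)/2 + (κ j : ℝ) by ring,
      show (u - ((j:ℕ):ℝ))/2 = u/2 - (j:ℕ)/2 by ring,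
      show u/2 - ((j:ℕ):ℝ)/2 + 1/2 + (κ j : ℝ) = (u+1)/2 - (j:ℕ)/2 + (κ j : ℝ) by ring,
      show u/2 - ((j:ℕ):ℝ)/2 + 1/2 = (u+1)/2 - (j:ℕ)/2 by ring] at h
    exact h
  calc (∏ j : Fin N, Real.Gamma (u - (j : ℕ) / 1 + ((2 * κ j : ℕ) : ℝ)) / Real.Gamma (u - (j : ℕ) / 1))
      = ∏ j : Fin N, (2 ^ (2 * κ j) *
          (Real.Gamma (u/2 - (j : ℕ) / 2 + (κ j : ℝ)) / Real.Gamma (u/2 - (j : ℕ) / 2)) *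
          (Real.Gamma ((u+1)/2 - (j : ℕ) / 2 + (κ j : ℝ)) / Real.Gamma ((u+1)/2 - (j : ℕ) / 2))) :=
        Finset.prod_congr rfl (fun j _ => hfac j)
    _ = _ := by
        rw [Finset.prod_mul_distrib, Finset.prod_mul_distrib, Finset.prod_pow_eq_pow_sum,
          ← Finset.mul_sum]

end
end

section
/- The power sum symmetric polynomial p_k(x_1,...,x_N) = Σ_{j=1}^N x_j^k equals the alternating sum of hook Schur polynomials: p_k = Σ_{l=0}^{k-1} (-1)^l s_{(k-l,1^l)}, where (k-l,1^l) denotes the hook partition with arm k-l and l parts equal to 1. -/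
open MeasureTheory Matrix
open scoped BigOperators

attribute [local instance] Classical.propDecidable

noncomputable section

/-- Schur polynomial via the bialternant (ratio of determinants) formula (3.0). -/
def schurV {N : ℕ} (κ : Fin N → ℕ) (x : Fin N → ℂ) : ℂ :=
  Matrix.det (Matrix.of fun i j : Fin N => x i ^ (κ j + (N - 1 - (j : ℕ)))) /
  Matrix.det (Matrix.of fun i j : Fin N => x i ^ (N - 1 - (j : ℕ)))

/-- The hook partition `(k - l, 1^l)` with at most `N` parts. -/
def hookP (N k l : ℕ) : Fin N → ℕ :=
  fun i => if (i : ℕ) = 0 then k - l else if (i : ℕ) ≤ l then 1 else 0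

namespace HookSchurAux

/-- The generalized alternant determinant. -/
def D {N : ℕ} (x : Fin N → ℂ) (e : Fin N → ℕ) : ℂ :=
  Matrix.det (Matrix.of fun i j : Fin N => x i ^ e j)

lemma D_comp {N : ℕ} (x : Fin N → ℂ) (e : Fin N → ℕ) (σ : Equiv.Perm (Fin N)) :
    D x (e ∘ σ) = ((Equiv.Perm.sign σ : ℤ) : ℂ) * D x e := by
  have h := Matrix.det_permute' σ (Matrix.of fun i j : Fin N => x i ^ e j)
  simpa [D, Matrix.submatrix] using h

/-- Muir's rule: `p_k * a_e = ∑_j a_{e + k e_j}`. -/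
lemma muir {N : ℕ} (x : Fin N → ℂ) (k : ℕ) (e : Fin N → ℕ) :
    (∑ m, x m ^ k) * D x e = ∑ j, D x (Function.update e j (e j + k)) := by
  classical
  simp only [D, Matrix.det_apply', Matrix.of_apply]
  rw [Finset.mul_sum]
  conv_rhs => rw [Finset.sum_comm]
  refine Finset.sum_congr rfl fun σ _ => ?_
  have hsum : (∑ m, x m ^ k) = ∑ j, x (σ j) ^ k :=
    (Equiv.sum_comp σ fun m => x m ^ k).symm
  rw [hsum, Finset.sum_mul]
  refine Finset.sum_congr rfl fun j _ => ?_
  have hp : ∀ i : Fin N, x (σ i) ^ (Function.update e j (e j + k) i)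
      = x (σ i) ^ e i * (if i = j then x (σ i) ^ k else 1) := by
    intro i
    rcases eq_or_ne i j with rfl | h
    · simp [pow_add]
    · simp [Function.update_of_ne h, h]
  rw [Finset.prod_congr rfl fun i _ => hp i, Finset.prod_mul_distrib,
      Finset.prod_ite_eq' Finset.univ j fun i => x (σ i) ^ k, if_pos (Finset.mem_univ j)]
  ring

/-- Terms where the raised exponent collides with another one vanish. -/
lemma G_vanish {N k : ℕ} (hk : 1 ≤ k) (x : Fin N → ℂ) (j : Fin N) (hj : k ≤ (j : ℕ)) :
    D x (Function.update (fun j' : Fin N => N - 1 - (j' : ℕ)) j ((N - 1 - (j : ℕ)) + k)) = 0 := by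
  classical
  have hjN : (j : ℕ) < N := j.isLt
  unfold D
  apply Matrix.det_zero_of_column_eq
    (i := (⟨(j : ℕ) - k, by omega⟩ : Fin N)) (j := j)
  · exact Fin.ne_of_val_ne (by simp; omega)
  · intro i
    simp only [Matrix.of_apply]
    congr 1
    rw [Function.update_of_ne (Fin.ne_of_val_ne (by simp; omega)), Function.update_self]
    simp only
    omega

/-- Sorting the columns of a raised alternant gives a hook alternant, up to sign. -/
lemma hook_step {M k : ℕ} (x : Fin (M + 1) → ℂ) (l : ℕ) (hlN : l < M + 1) (hlk : l < k) :
    D x (Function.update (fun j' : Fin (M + 1) => M + 1 - 1 - (j' : ℕ)) ⟨l, hlN⟩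
        ((M + 1 - 1 - ((⟨l, hlN⟩ : Fin (M + 1)) : ℕ)) + k))
      = (-1 : ℂ) ^ l *
        D x (fun j : Fin (M + 1) => hookP (M + 1) k l j + (M + 1 - 1 - (j : ℕ))) := by
  classical
  set lf : Fin (M + 1) := ⟨l, hlN⟩ with hlf
  have hcomp : Function.update (fun j' : Fin (M + 1) => M + 1 - 1 - (j' : ℕ)) lf
        ((M + 1 - 1 - (lf : ℕ)) + k)
      = (fun j : Fin (M + 1) => hookP (M + 1) k l j + (M + 1 - 1 - (j : ℕ)))
          ∘ (Fin.cycleRange lf) := by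
    funext j
    have hlval : (lf : ℕ) = l := rfl
    rcases lt_trichotomy j lf with h | rfl | h
    · rw [Function.update_of_ne (ne_of_lt h), Function.comp_apply,
        Fin.cycleRange_of_lt h]
      have hjl : (j : ℕ) < l := h
      have h1 : ((j + 1 : Fin (M + 1)) : ℕ) = (j : ℕ) + 1 :=
        Fin.val_add_one_of_lt (lt_of_lt_of_le h (Fin.le_last lf))
      simp only [hookP, h1]
      rw [if_neg (Nat.succ_ne_zero _), if_pos (by omega)]
      omega
    · rw [Function.update_self, Function.comp_apply, Fin.cycleRange_self]
      simp only [hookP, Fin.val_zero, if_true, ite_true]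
      omega
    · rw [Function.update_of_ne (ne_of_gt h), Function.comp_apply,
        Fin.cycleRange_of_gt h]
      have hjl : l < (j : ℕ) := h
      simp only [hookP]
      rw [if_neg (by omega), if_neg (by omega)]
      omega
  rw [hcomp, D_comp, Fin.sign_cycleRange]
  have : (lf : ℕ) = l := rfl
  rw [this]
  norm_num

end HookSchurAux

/-- `p_k = sum_{l=0}^{k-1} (-1)^l s_{(k-l,1^l)}`, where Schur polynomials
indexed by hooks with more than `N` parts are zero. -/
theorem powerSum_eq_alternating_hook_schur (N k : ℕ) (hk : 1 ≤ k)
    (x : Fin N → ℂ) (hx : Function.Injective x) :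
    ∑ j, x j ^ k =
      ∑ l ∈ Finset.range k, if l < N then (-1 : ℂ) ^ l * schurV (hookP N k l) x else 0 := by
  classical
  rcases Nat.eq_zero_or_pos N with hN | hN
  · subst hN
    simp
  obtain ⟨M, rfl⟩ := Nat.exists_eq_succ_of_ne_zero (Nat.pos_iff_ne_zero.mp hN)
  set E : Fin (M + 1) → ℕ := fun j => M + 1 - 1 - (j : ℕ) with hE
  -- the Vandermonde determinant is nonzero
  have hV0 : HookSchurAux.D x E ≠ 0 := by
    have h1 : E = (fun j : Fin (M + 1) => (j : ℕ)) ∘ (Fin.revPerm : Equiv.Perm (Fin (M + 1))) := by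
      funext j
      simp [hE, Fin.val_rev]
    rw [h1, HookSchurAux.D_comp]
    have h2 : HookSchurAux.D x (fun j : Fin (M + 1) => (j : ℕ))
        = (Matrix.vandermonde x).det := rfl
    rw [h2]
    refine mul_ne_zero ?_ (Matrix.det_vandermonde_ne_zero_iff.mpr hx)
    simp
  refine mul_right_cancel₀ hV0 ?_
  rw [HookSchurAux.muir x k E, Finset.sum_mul]
  set f : ℕ → ℂ := fun l =>
    if h : l < M + 1 then
      HookSchurAux.D x (Function.update E ⟨l, h⟩ (E ⟨l, h⟩ + k)) else 0 with hf
  have hzero : ∀ l, k ≤ l ∨ M + 1 ≤ l → f l = 0 := by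
    intro l hl
    rcases hl with hl | hl
    · by_cases h : l < M + 1
      · rw [hf]
        simp only [dif_pos h]
        exact HookSchurAux.G_vanish hk x ⟨l, h⟩ hl
      · rw [hf]; simp only [dif_neg h]
    · rw [hf]; simp only [dif_neg (by omega : ¬ l < M + 1)]
  have hL : ∑ j : Fin (M + 1), HookSchurAux.D x (Function.update E j (E j + k))
      = ∑ l ∈ Finset.range (M + 1), f l := by
    rw [← Fin.sum_univ_eq_sum_range]
    refine Finset.sum_congr rfl fun j _ => ?_
    rw [hf]
    simp only [dif_pos j.isLt, Fin.eta]
  have hR : ∀ l ∈ Finset.range k,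
      (if l < M + 1 then (-1 : ℂ) ^ l * schurV (hookP (M + 1) k l) x else 0)
        * HookSchurAux.D x E = f l := by
    intro l hl
    have hlk := Finset.mem_range.mp hl
    by_cases h : l < M + 1
    · rw [if_pos h, hf]
      simp only [dif_pos h]
      have hs : schurV (hookP (M + 1) k l) x
          = HookSchurAux.D x (fun j => hookP (M + 1) k l j + (M + 1 - 1 - (j : ℕ)))
            / HookSchurAux.D x E := rfl
      rw [hs, mul_div_assoc', div_mul_cancel₀ _ hV0, HookSchurAux.hook_step x l h hlk]
    · rw [if_neg h, hf]
      simp only [dif_neg h, zero_mul]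
  have h1 : ∑ l ∈ Finset.range (M + 1), f l = ∑ l ∈ Finset.range (min (M + 1) k), f l := by
    refine (Finset.sum_subset (Finset.range_subset_range.mpr (min_le_left _ _)) ?_).symm
    intro l hl hnl
    simp only [Finset.mem_range] at hl hnl
    exact hzero l (by omega)
  have h2 : ∑ l ∈ Finset.range k, f l = ∑ l ∈ Finset.range (min (M + 1) k), f l := by
    refine (Finset.sum_subset (Finset.range_subset_range.mpr (min_le_right _ _)) ?_).symm
    intro l hl hnl
    simp only [Finset.mem_range] at hl hnl
    exact hzero l (by omega)
  rw [hL, h1, Finset.sum_congr rfl hR]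
  exact h2.symm

end
end

section
/- Conjugation formula for the generalized Pochhammer symbol: for any partition κ and its conjugate κ', [u]_{κ'}^{(α)} = (-α)^{-|κ|} [-αu]_κ^{(1/α)}. -/
open MeasureTheory Matrix
open scoped BigOperators

attribute [local instance] Classical.propDecidable

noncomputable section

/-- Generalized Pochhammer symbol `[u]_kappa^{(alpha)}` (product form). -/
def genPochP {N : ℕ} (α u : ℝ) (κ : Fin N → ℕ) : ℝ :=
  ∏ j : Fin N, ∏ i ∈ Finset.range (κ j), (u - (j : ℕ) / α + i)

/-- The conjugate (transpose) partition, recorded with `N` parts. -/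
def conjP {M N : ℕ} (κ : Fin M → ℕ) : Fin N → ℕ :=
  fun j => (Finset.univ.filter fun i : Fin M => (j : ℕ) < κ i).card

lemma card_filter_val_lt (N i : ℕ) (h : i ≤ N) :
    (Finset.univ.filter fun l : Fin N => (l:ℕ) < i).card = i := by
  have hb : ∀ m ∈ Finset.range i, m < N := fun m hm => lt_of_lt_of_le (Finset.mem_range.1 hm) h
  have : (Finset.univ.filter fun l : Fin N => (l:ℕ) < i) = (Finset.range i).attachFin hb := by
    ext l
    simp [Finset.mem_attachFin]
  rw [this, Finset.card_attachFin, Finset.card_range]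

lemma conj_lt_iff {N : ℕ} (κ : Fin N → ℕ) (hκ : Antitone κ) {i : ℕ} (hi : i < N) (j : ℕ) :
    i < (Finset.univ.filter fun l : Fin N => j < κ l).card ↔ j < κ ⟨i, hi⟩ := by
  constructor
  · intro h
    by_contra hj
    push_neg at hj
    have hsub : (Finset.univ.filter fun l : Fin N => j < κ l) ⊆
        Finset.univ.filter fun l : Fin N => (l:ℕ) < i := by
      intro l hl
      simp only [Finset.mem_filter, Finset.mem_univ, true_and] at hl ⊢
      by_contra hli
      push_neg at hli
      have : κ l ≤ κ ⟨i, hi⟩ := hκ (by exact hli)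
      omega
    have := Finset.card_le_card hsub
    rw [card_filter_val_lt N i hi.le] at this
    omega
  · intro h
    have hsub : (Finset.univ.filter fun l : Fin N => (l:ℕ) < i + 1) ⊆
        Finset.univ.filter fun l : Fin N => j < κ l := by
      intro l hl
      simp only [Finset.mem_filter, Finset.mem_univ, true_and] at hl ⊢
      have : κ ⟨i, hi⟩ ≤ κ l := hκ (by exact Nat.lt_succ_iff.1 hl)
      omega
    have := Finset.card_le_card hsub
    rw [card_filter_val_lt N (i+1) hi] at this
    omega

/-- conjugation formula
`[u]_{kappa'}^{(alpha)} = (-alpha)^{-|kappa|} [-alpha u]_kappa^{(1/alpha)}`. -/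
theorem pochhammer_conjugation (N M : ℕ) (α : ℝ) (hα : α ≠ 0)
    (κ : Fin N → ℕ) (hκ : Antitone κ) (hM : ∀ i, κ i ≤ M) (u : ℝ) :
    genPochP (N := M) α u (conjP κ) =
      ((-α) ^ (∑ i, κ i))⁻¹ * genPochP (1 / α) (-(α * u)) κ := by
  set c : ℕ → ℕ := fun j => (Finset.univ.filter fun l : Fin N => j < κ l).card with hc
  set K : ℕ → ℕ := fun l => if h : l < N then κ ⟨l, h⟩ else 0 with hK
  have hcN : ∀ j, c j ≤ N := fun j =>
    (Finset.card_filter_le _ _).trans (by simp)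
  -- RHS computation
  have hrhs : genPochP (1 / α) (-(α * u)) κ
      = (-α) ^ (∑ i, κ i) * ∏ l : Fin N, ∏ j ∈ Finset.range (κ l), (u + (l:ℕ) - (j:ℕ)/α) := by
    unfold genPochP
    rw [← Finset.prod_pow_eq_pow_sum, ← Finset.prod_mul_distrib]
    apply Finset.prod_congr rfl
    intro l _
    have h1 : ∀ j ∈ Finset.range (κ l),
        (-(α*u) - ((l:ℕ):ℝ)/(1/α) + (j:ℕ)) = (-α) * (u + ((l:ℕ):ℝ) - ((j:ℕ):ℝ)/α) := by
      intro j _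
      field_simp
      ring
    rw [Finset.prod_congr rfl h1, Finset.prod_mul_distrib, Finset.prod_const, Finset.card_range]
  -- convert Fin products to range products
  have hlhs : genPochP (N := M) α u (conjP κ)
      = ∏ j ∈ Finset.range M, ∏ i ∈ Finset.range (c j), (u - (j:ℕ)/α + (i:ℕ)) := by
    unfold genPochP conjP
    rw [Finset.prod_range fun j => ∏ i ∈ Finset.range (c j), (u - (j:ℕ)/α + (i:ℕ))]
  have hP : (∏ l : Fin N, ∏ j ∈ Finset.range (κ l), (u + (l:ℕ) - (j:ℕ)/α))
      = ∏ l ∈ Finset.range N, ∏ j ∈ Finset.range (K l), (u + (l:ℕ) - (j:ℕ)/α) := by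
    rw [Finset.prod_range fun l => ∏ j ∈ Finset.range (K l), (u + (l:ℕ) - (j:ℕ)/α)]
    apply Finset.prod_congr rfl
    intro l _
    have : K (l : ℕ) = κ l := by simp [hK, l.isLt]
    rw [this]
  -- main reindexing
  have key : (∏ j ∈ Finset.range M, ∏ i ∈ Finset.range (c j), (u - (j:ℕ)/α + (i:ℕ)))
      = ∏ l ∈ Finset.range N, ∏ j ∈ Finset.range (K l), (u + (l:ℕ) - (j:ℕ)/α) := by
    rw [Finset.prod_sigma', Finset.prod_sigma']
    apply Finset.prod_nbij' (fun p => (⟨p.2, p.1⟩ : (_ : ℕ) × ℕ))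
      (fun p => (⟨p.2, p.1⟩ : (_ : ℕ) × ℕ))
    · intro p hp
      simp only [Finset.mem_sigma, Finset.mem_range] at hp ⊢
      have hpN : p.2 < N := lt_of_lt_of_le hp.2 (hcN p.1)
      refine ⟨hpN, ?_⟩
      have := (conj_lt_iff κ hκ hpN p.1).1 hp.2
      simpa [hK, hpN] using this
    · intro p hp
      simp only [Finset.mem_sigma, Finset.mem_range] at hp ⊢
      have hpN : p.1 < N := hp.1
      have hk : p.2 < κ ⟨p.1, hpN⟩ := by simpa [hK, hpN] using hp.2
      exact ⟨lt_of_lt_of_le hk (hM _), (conj_lt_iff κ hκ hpN p.2).2 hk⟩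
    · intro p hp; rfl
    · intro p hp; rfl
    · intro p hp; ring
  rw [hlhs, hrhs, hP, key, ← mul_assoc,
    inv_mul_cancel₀ (pow_ne_zero _ (neg_ne_zero.2 hα)), one_mul]

end
end

section
/- Complementation formula for the generalized Pochhammer symbol: for a partition κ fitting in an N×s box, let κ^c := (s - κ_N, s - κ_{N-1}, ..., s - κ_1) be the complementary partition. Then [u]_{κ^c}^{(α)} = (-1)^{|κ^c|} [(N-1)/α - u + 1 - s]_{s^N}^{(α)} / [(N-1)/α - u + 1 - s]_{κ}^{(α)}, as an identity of rational functions in u. -/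
open MeasureTheory Matrix
open scoped BigOperators

attribute [local instance] Classical.propDecidable

noncomputable section

private lemma poch_base (u : ℝ) : ∀ s : ℕ,
    (∏ i ∈ Finset.range s, (u + (i : ℝ)))
      = (-1 : ℝ) ^ s * ∏ i ∈ Finset.range s, (1 - (s : ℝ) - u + i) := by
  intro s
  induction s with
  | zero => simp
  | succ n ih =>
      have hstep : (∏ i ∈ Finset.range (n + 1), (1 - ((n + 1 : ℕ) : ℝ) - u + i))
          = (∏ i ∈ Finset.range n, (1 - (n : ℝ) - u + i)) * (1 - ((n + 1 : ℕ) : ℝ) - u) := by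
        rw [Finset.prod_range_succ' (fun i => (1 - ((n + 1 : ℕ) : ℝ) - u + i))]
        congr 1
        · exact Finset.prod_congr rfl (fun i _ => by push_cast; ring)
        · push_cast; ring
      rw [Finset.prod_range_succ, ih, hstep]
      push_cast
      ring

private lemma poch_key (u : ℝ) (s : ℕ) : ∀ k : ℕ, k ≤ s →
    (∏ i ∈ Finset.range (s - k), (u + (i : ℝ))) *
        ∏ i ∈ Finset.range k, (1 - (s : ℝ) - u + i)
      = (-1 : ℝ) ^ (s - k) * ∏ i ∈ Finset.range s, (1 - (s : ℝ) - u + i) := by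
  intro k
  induction k with
  | zero => simpa using poch_base u s
  | succ m ih =>
      intro hm
      have ih' := ih (by omega)
      have hsm : s - m = (s - (m + 1)) + 1 := by omega
      rw [Finset.prod_range_succ]
      rw [hsm, Finset.prod_range_succ, pow_succ] at ih'
      have hc : ((s - (m + 1) : ℕ) : ℝ) = (s : ℝ) - (m : ℝ) - 1 := by
        have : ((s - (m+1) : ℕ) : ℝ) = ((s : ℕ) : ℝ) - ((m+1 : ℕ) : ℝ) :=
          Nat.cast_sub hm
        rw [this]; push_cast; ring
      rw [hc] at ih'
      have hw : (1 - (s : ℝ) - u + (m : ℝ)) = -(u + ((s : ℝ) - (m : ℝ) - 1)) := by ring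
      rw [hw]
      nlinarith [ih']

/-- complementation formula for the generalized Pochhammer symbol,
stated with denominators cleared (an identity of polynomials in `u`). -/
theorem pochhammer_complementation (N s : ℕ) (α : ℝ) (hα : α ≠ 0)
    (κ : Fin N → ℕ) (hκ : Antitone κ) (hs : ∀ i, κ i ≤ s) (u : ℝ) :
    genPochP α u (fun i => s - κ (Fin.rev i)) *
        genPochP α (((N : ℝ) - 1) / α - u + 1 - s) κ =
      (-1 : ℝ) ^ (∑ i : Fin N, (s - κ i)) *
        genPochP α (((N : ℝ) - 1) / α - u + 1 - s) (fun _ : Fin N => s) := by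
  unfold genPochP
  have h1 : (∏ j : Fin N, ∏ i ∈ Finset.range (s - κ (Fin.rev j)),
        (u - ((j : ℕ) : ℝ) / α + i))
      = ∏ j : Fin N, ∏ i ∈ Finset.range (s - κ j),
        (u - (((Fin.rev j : Fin N) : ℕ) : ℝ) / α + i) := by
    rw [← Equiv.prod_comp Fin.revPerm
      (fun j : Fin N => ∏ i ∈ Finset.range (s - κ j),
        (u - (((Fin.rev j : Fin N) : ℕ) : ℝ) / α + i))]
    exact Finset.prod_congr rfl (fun j _ => by simp [Fin.rev_rev])
  rw [h1, ← Finset.prod_pow_eq_pow_sum, ← Finset.prod_mul_distrib,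
    ← Finset.prod_mul_distrib]
  refine Finset.prod_congr rfl (fun j _ => ?_)
  have hj : (j : ℕ) < N := j.isLt
  have hrev : (((Fin.rev j : Fin N) : ℕ) : ℝ) = (N : ℝ) - 1 - ((j : ℕ) : ℝ) := by
    rw [Fin.val_rev]
    have : ((N - ((j : ℕ) + 1) : ℕ) : ℝ) = ((N : ℕ) : ℝ) - (((j : ℕ) + 1 : ℕ) : ℝ) :=
      Nat.cast_sub (by omega)
    rw [this]; push_cast; ring
  set u' : ℝ := u - (((N : ℝ) - 1) / α - ((j : ℕ) : ℝ) / α) with hu'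
  have key := poch_key u' s (κ j) (hs j)
  have e1 : (∏ i ∈ Finset.range (s - κ j), (u - (((Fin.rev j : Fin N) : ℕ) : ℝ) / α + i))
      = ∏ i ∈ Finset.range (s - κ j), (u' + (i : ℝ)) :=
    Finset.prod_congr rfl (fun i _ => by rw [hrev, hu']; ring)
  have e2 : (∏ i ∈ Finset.range (κ j),
        (((N : ℝ) - 1) / α - u + 1 - (s : ℝ) - ((j : ℕ) : ℝ) / α + i))
      = ∏ i ∈ Finset.range (κ j), (1 - (s : ℝ) - u' + i) :=
    Finset.prod_congr rfl (fun i _ => by rw [hu']; ring)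
  have e3 : (∏ i ∈ Finset.range s,
        (((N : ℝ) - 1) / α - u + 1 - (s : ℝ) - ((j : ℕ) : ℝ) / α + i))
      = ∏ i ∈ Finset.range s, (1 - (s : ℝ) - u' + i) :=
    Finset.prod_congr rfl (fun i _ => by rw [hu']; ring)
  rw [e1, e2, e3]
  exact key

end
end
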